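/- With the 4-dimensional Singer–Thorpe curvature tensor as above (components a,b,c and α=a+τ/12, β=b+τ/12, γ=c+τ/12, α+β+γ=0), one has R̂_{ij} = (1/4)R̂ δ_{ij} with R̂ = 192abc + 32τ(ab+bc+ca) − (7/12)τ³, and R̊_{ij} = (1/4)R̊ δ_{ij} with R̊ = 96abc + 4τ(ab+bc+ca) − τ³/24. -/
import Mathlib


open scoped BigOperators

/-- Kronecker delta (the inner product in an orthonormal basis). -/
def kd {m : ℕ} (i j : Fin m) : ℝ := if i = j then 1 else 0

namespace Alg

variable {n : ℕ}

/-- Ricci tensor `ρ_{ij} = R_{aija}` of an algebraic curvature tensor. -/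
def ric (T : Fin n → Fin n → Fin n → Fin n → ℝ) (i j : Fin n) : ℝ :=
  ∑ a, T a i j a

/-- Scalar curvature (double trace). -/
def scal (T : Fin n → Fin n → Fin n → Fin n → ℝ) : ℝ := ∑ i, ric T i i

/-- `|R|² = Σ R_{abcd}²`. -/
def normSq (T : Fin n → Fin n → Fin n → Fin n → ℝ) : ℝ :=
  ∑ a, ∑ b, ∑ c, ∑ d, (T a b c d) ^ 2

/-- `R_{iabc}R_{jabc}`. -/
def RR2 (T : Fin n → Fin n → Fin n → Fin n → ℝ) (i j : Fin n) : ℝ :=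
  ∑ a, ∑ b, ∑ c, T i a b c * T j a b c

/-- `R̂ = R_{abcd}R_{abuv}R_{cduv}`. -/
def Rhat (T : Fin n → Fin n → Fin n → Fin n → ℝ) : ℝ :=
  ∑ a, ∑ b, ∑ c, ∑ d, ∑ u, ∑ v, T a b c d * T a b u v * T c d u v

/-- `R̊ = R_{abcd}R_{aucv}R_{budv}`. -/
def Rring (T : Fin n → Fin n → Fin n → Fin n → ℝ) : ℝ :=
  ∑ a, ∑ b, ∑ c, ∑ d, ∑ u, ∑ v, T a b c d * T a u c v * T b u d v

/-- `R̂_{ij} = R_{ibac}R_{jbuv}R_{acuv}`. -/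
def RhatT (T : Fin n → Fin n → Fin n → Fin n → ℝ) (i j : Fin n) : ℝ :=
  ∑ a, ∑ b, ∑ c, ∑ u, ∑ v, T i b a c * T j b u v * T a c u v

/-- `R̊_{ij} = R_{iabc}R_{jubv}R_{aucv}`. -/
def RringT (T : Fin n → Fin n → Fin n → Fin n → ℝ) (i j : Fin n) : ℝ :=
  ∑ a, ∑ b, ∑ c, ∑ u, ∑ v, T i a b c * T j u b v * T a u c v

end Alg

/-- Elementary antisymmetric 2-tensor `(e^p ∧ e^q)_{ij}`. -/
def E2 {n : ℕ} (p q i j : Fin n) : ℝ := kd p i * kd q j - kd q i * kd p j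

/-- The Singer–Thorpe algebraic curvature tensor on `ℝ⁴` with
`R₁₂₁₂=R₃₄₃₄=a`, `R₁₃₁₃=R₂₄₂₄=b`, `R₁₄₁₄=R₂₃₂₃=c`, `R₁₂₃₄=α`, `R₁₃₄₂=β`,
`R₁₄₂₃=γ`, all other components vanishing up to the curvature symmetries. -/
def stR (a b c α β γ : ℝ) (i j k l : Fin 4) : ℝ :=
  a * (E2 0 1 i j * E2 0 1 k l + E2 2 3 i j * E2 2 3 k l) +
  b * (E2 0 2 i j * E2 0 2 k l + E2 1 3 i j * E2 1 3 k l) +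
  c * (E2 0 3 i j * E2 0 3 k l + E2 1 2 i j * E2 1 2 k l) +
  α * (E2 0 1 i j * E2 2 3 k l + E2 2 3 i j * E2 0 1 k l) +
  β * (E2 0 2 i j * E2 3 1 k l + E2 3 1 i j * E2 0 2 k l) +
  γ * (E2 0 3 i j * E2 1 2 k l + E2 1 2 i j * E2 0 3 k l)


set_option maxHeartbeats 4000000

private lemma st_scal_eq (a b c α β γ : ℝ) :
    Alg.scal (stR a b c α β γ) = -4 * (a + b + c) := by
  simp [Alg.scal, Alg.ric, Fin.sum_univ_four, stR, E2, kd]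
  ring

private lemma st_hat_eq (a b c α β γ : ℝ) :
    Alg.Rhat (stR a b c α β γ) =
      16 * (a^3 + b^3 + c^3) + 48 * (a * α^2 + b * β^2 + c * γ^2) := by
  simp [Alg.Rhat, Fin.sum_univ_four, stR, E2, kd]
  ring

private lemma st_ring_eq (a b c α β γ : ℝ) :
    Alg.Rring (stR a b c α β γ) =
      24 * (a * b * c + a * β * γ + b * α * γ + c * α * β) := by
  simp [Alg.Rring, Fin.sum_univ_four, stR, E2, kd]
  ring

private lemma st_hatT_eq (a b c α β γ : ℝ) (i j : Fin 4) :
    Alg.RhatT (stR a b c α β γ) i j =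
      (4 * (a^3 + b^3 + c^3) + 12 * (a * α^2 + b * β^2 + c * γ^2)) * kd i j := by
  fin_cases i <;> fin_cases j <;>
    simp [Alg.RhatT, Fin.sum_univ_four, stR, E2, kd] <;> ring

private lemma st_ringT_eq (a b c α β γ : ℝ) (i j : Fin 4) :
    Alg.RringT (stR a b c α β γ) i j =
      (6 * (a * b * c + a * β * γ + b * α * γ + c * α * β)) * kd i j := by
  fin_cases i <;> fin_cases j <;>
    simp [Alg.RringT, Fin.sum_univ_four, stR, E2, kd] <;> ring

/-- for the Singer–Thorpe curvature tensor with `α+β+γ=0`,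
`α=a+τ/12`, `β=b+τ/12`, `γ=c+τ/12`, one has `R̂_{ij} = (1/4)R̂ δ_{ij}` with
`R̂ = 192abc + 32τ(ab+bc+ca) − (7/12)τ³`, and `R̊_{ij} = (1/4)R̊ δ_{ij}` with
`R̊ = 96abc + 4τ(ab+bc+ca) − τ³/24`. -/
theorem singerThorpe_cubic_contractions (a b c α β γ : ℝ)
    (hsum : α + β + γ = 0)
    (hα : α = a + Alg.scal (stR a b c α β γ) / 12)
    (hβ : β = b + Alg.scal (stR a b c α β γ) / 12)
    (hγ : γ = c + Alg.scal (stR a b c α β γ) / 12) :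
    (∀ i j : Fin 4,
      Alg.RhatT (stR a b c α β γ) i j =
        1 / 4 * Alg.Rhat (stR a b c α β γ) * kd i j) ∧
    Alg.Rhat (stR a b c α β γ) =
      192 * a * b * c +
        32 * Alg.scal (stR a b c α β γ) * (a * b + b * c + c * a) -
          7 / 12 * (Alg.scal (stR a b c α β γ)) ^ 3 ∧
    (∀ i j : Fin 4,
      Alg.RringT (stR a b c α β γ) i j =
        1 / 4 * Alg.Rring (stR a b c α β γ) * kd i j) ∧
    Alg.Rring (stR a b c α β γ) =
      96 * a * b * c +
        4 * Alg.scal (stR a b c α β γ) * (a * b + b * c + c * a) -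
          (Alg.scal (stR a b c α β γ)) ^ 3 / 24 := by
  rw [st_scal_eq] at hα hβ hγ
  subst hα; subst hβ; subst hγ
  refine ⟨fun i j => by rw [st_hatT_eq, st_hat_eq]; ring, ?_,
    fun i j => by rw [st_ringT_eq, st_ring_eq]; ring, ?_⟩
  · rw [st_hat_eq, st_scal_eq]; ring
  · rw [st_ring_eq, st_scal_eq]; ring
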